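/- Let Ω ⊆ 𝕆 be a bounded domain and f : Ω → 𝕆 a continuous function such that f(Ω) is open. Let α ∈ Ω be a point with ρ := liminf_{w→∂Ω} |f(w) - f(α)| > 0. Then the open ball B(f(α), ρ) is contained in f(Ω). -/

import Mathlib

noncomputable section

open Quaternion

/-- The octonions, realized via the Cayley–Dickson construction over the quaternions. -/
abbrev Octo := ℍ[ℝ] × ℍ[ℝ]

namespace Octo

/-- Octonion multiplication (Cayley–Dickson): (z₁,z₂)(w₁,w₂) = (z₁w₁ - w̄₂z₂, z₂w̄₁ + w₂z₁). -/
def mul' (z w : Octo) : Octo :=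
  (z.1 * w.1 - star w.2 * z.2, z.2 * star w.1 + w.2 * z.1)

/-- Octonionic conjugation. -/
def conj' (x : Octo) : Octo := (star x.1, -x.2)

/-- The multiplicative unit of the octonions. -/
def one' : Octo := (1, 0)

/-- The embedding of the reals into the octonions. -/
def emb (x : ℝ) : Octo := (algebraMap ℝ ℍ[ℝ] x, 0)

/-- The real part of an octonion. -/
def re' (x : Octo) : ℝ := x.1.re

/-- The imaginary part of an octonion. -/
def im' (x : Octo) : Octo := x - emb (re' x)

/-- The standard Euclidean inner product on 𝕆 ≅ ℝ⁸. -/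
def inner' (x y : Octo) : ℝ := (inner ℝ x.1 y.1 : ℝ) + (inner ℝ x.2 y.2 : ℝ)

/-- The Euclidean norm on the octonions. -/
def norm' (x : Octo) : ℝ := Real.sqrt (inner' x x)

/-- The multiplicative inverse of a nonzero octonion. -/
def inv' (x : Octo) : Octo := (inner' x x)⁻¹ • conj' x

/-- The associator [u,v,w] = (uv)w - u(vw). -/
def assoc' (u v w : Octo) : Octo := mul' (mul' u v) w - mul' u (mul' v w)

/-- n-th power of an octonion. -/
def pow' (x : Octo) : ℕ → Octo
  | 0 => one'
  | n + 1 => mul' x (pow' x n)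

/-- A purely imaginary unit octonion: I ∈ 𝕊 iff I² = -1. -/
def IsImUnit (I : Octo) : Prop := mul' I I = - one'

/-- The point x + yI on the slice ℂ_I. -/
def pt (I : Octo) (p : ℝ × ℝ) : Octo := emb p.1 + p.2 • I

/-- The slice ℂ_I = ℝ ⊕ Iℝ. -/
def sliceSet (I : Octo) : Set Octo := {z | ∃ p : ℝ × ℝ, z = pt I p}

/-- e^{θI} = cos θ + (sin θ) I. -/
def expI (θ : ℝ) (I : Octo) : Octo := emb (Real.cos θ) + Real.sin θ • I

/-- Slice regularity: on every slice ℂ_I the function is holomorphic, i.e. real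
differentiable with ∂f/∂x + I ∂f/∂y = 0. -/
def SliceRegular (Ω : Set Octo) (f : Octo → Octo) : Prop :=
  ∀ I, IsImUnit I → ∀ p : ℝ × ℝ, pt I p ∈ Ω →
    ∃ fx fy : Octo,
      HasFDerivAt (fun q : ℝ × ℝ => f (pt I q))
        ((ContinuousLinearMap.fst ℝ ℝ ℝ).smulRight fx
          + (ContinuousLinearMap.snd ℝ ℝ ℝ).smulRight fy) p
      ∧ fx + mul' I fy = 0

/-- Symmetric slice domain: open, connected, meeting the real axis, with each slice a
domain, and axially symmetric. -/
def SymSliceDomain (Ω : Set Octo) : Prop :=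
  IsOpen Ω ∧ IsConnected Ω ∧ (∃ x : ℝ, emb x ∈ Ω) ∧
  (∀ I, IsImUnit I → IsConnected {p : ℝ × ℝ | pt I p ∈ Ω}) ∧
  (∀ I J, IsImUnit I → IsImUnit J → ∀ p : ℝ × ℝ, pt I p ∈ Ω → pt J p ∈ Ω)

/-- The open unit ball 𝔹 of the octonions. -/
def ball1 : Set Octo := {z | norm' z < 1}

end Octo

open Octo in
/-- Topological covering lemma: if f is continuous on a bounded domain with open image
and lim inf of |f(w) - f(α)| towards the boundary is at least ρ > 0, then the ball
B(f(α), ρ) is contained in f(Ω). -/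
theorem ball_subset_of_liminf_boundary (Ω : Set Octo)
    (hopen : IsOpen Ω) (hconn : IsConnected Ω) (hbdd : Bornology.IsBounded Ω)
    (f : Octo → Octo) (hcont : ContinuousOn f Ω) (himg : IsOpen (f '' Ω))
    (α : Octo) (hα : α ∈ Ω) (ρ : ℝ) (hρ : 0 < ρ)
    (hlim : ∀ w : ℕ → Octo, (∀ n, w n ∈ Ω) → ∀ b ∈ frontier Ω,
      Filter.Tendsto w Filter.atTop (nhds b) →
      ρ ≤ Filter.liminf (fun n => norm' (f (w n) - f α)) Filter.atTop) :
    {z : Octo | norm' (z - f α) < ρ} ⊆ f '' Ω := by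
  -- Identify norm' with the L² norm via the continuous linear equivalence
  set e : WithLp 2 (ℍ[ℝ] × ℍ[ℝ]) ≃L[ℝ] (ℍ[ℝ] × ℍ[ℝ]) :=
    WithLp.prodContinuousLinearEquiv 2 ℝ ℍ[ℝ] ℍ[ℝ] with he
  have hnorm : ∀ x : Octo, norm' x = ‖e.symm x‖ := by
    intro x
    rw [WithLp.prod_norm_eq_of_L2]
    unfold norm' inner'
    congr 1
    have h1 : (e.symm x).fst = x.1 := rfl
    have h2 : (e.symm x).snd = x.2 := rfl
    rw [h1, h2, real_inner_self_eq_norm_sq, real_inner_self_eq_norm_sq]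
  have hnormd : ∀ x y : Octo, norm' (x - y) = dist (e.symm x) (e.symm y) := by
    intro x y
    rw [hnorm, dist_eq_norm, map_sub]
  set B : Set Octo := {z : Octo | norm' (z - f α) < ρ} with hB
  -- B is the image of a metric ball under the homeomorphism e
  have hBeq : B = ⇑e '' (Metric.ball (e.symm (f α)) ρ) := by
    ext z
    constructor
    · intro hz
      exact ⟨e.symm z, by rwa [Metric.mem_ball, ← hnormd], e.apply_symm_apply z⟩
    · rintro ⟨y, hy, rfl⟩
      simp only [hB, Set.mem_setOf_eq]
      rw [hnormd, e.symm_apply_apply]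
      rwa [Metric.mem_ball] at hy
  have hBconn : IsPreconnected B := by
    rw [hBeq]
    exact ((convex_ball _ _).isPreconnected).image _ e.continuous.continuousOn
  -- apply the clopen argument
  intro z hz
  have key : B ⊆ f '' Ω := by
    apply hBconn.subset_of_closure_inter_subset himg
    · refine ⟨f α, ?_, ⟨α, hα, rfl⟩⟩
      simp only [hB, Set.mem_setOf_eq, sub_self]
      have : norm' (0 : Octo) = 0 := by
        rw [hnorm]; simp
      rwa [this]
    · -- closure (f '' Ω) ∩ B ⊆ f '' Ω
      rintro y ⟨hyc, hyB⟩
      obtain ⟨v, hv, hvlim⟩ := mem_closure_iff_seq_limit.mp hyc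
      choose w hwΩ hwf using hv
      have hcomp : IsCompact (closure Ω) := hbdd.isCompact_closure
      obtain ⟨b, hb, φ, hφ, hblim⟩ := hcomp.tendsto_subseq
        (fun n => subset_closure (hwΩ n))
      by_cases hbΩ : b ∈ Ω
      · -- limit point inside Ω: use continuity
        have htend : Filter.Tendsto (fun n => f (w (φ n))) Filter.atTop (nhds (f b)) := by
          have := (hcont b hbΩ).tendsto
          exact this.comp (tendsto_nhdsWithin_of_tendsto_nhds_of_eventually_within _
            hblim (Filter.Eventually.of_forall fun n => hwΩ (φ n)))
        have htend' : Filter.Tendsto (fun n => f (w (φ n))) Filter.atTop (nhds y) := by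
          have : (fun n => f (w (φ n))) = (fun n => v (φ n)) := by
            funext n; exact hwf (φ n)
          rw [this]
          exact hvlim.comp hφ.tendsto_atTop
        have : y = f b := tendsto_nhds_unique htend' htend
        exact ⟨b, hbΩ, this.symm⟩
      · -- limit point on the boundary: contradiction with hlim
        exfalso
        have hbfr : b ∈ frontier Ω := by
          rw [hopen.frontier_eq]
          exact ⟨hb, hbΩ⟩
        have hρle := hlim (fun n => w (φ n)) (fun n => hwΩ (φ n)) b hbfr hblim
        -- but the liminf equals norm' (y - f α) < ρ
        have hconv : Filter.Tendsto (fun n => norm' (f (w (φ n)) - f α)) Filter.atTop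
            (nhds (norm' (y - f α))) := by
          have h1 : (fun n => norm' (f (w (φ n)) - f α))
              = (fun n => dist (e.symm (v (φ n))) (e.symm (f α))) := by
            funext n; rw [hwf (φ n), hnormd]
          rw [h1, hnormd]
          exact (Filter.Tendsto.dist (e.symm.continuous.tendsto y |>.comp
            (hvlim.comp hφ.tendsto_atTop)) tendsto_const_nhds)
        have : Filter.liminf (fun n => norm' (f (w (φ n)) - f α)) Filter.atTop
            = norm' (y - f α) := hconv.liminf_eq
        rw [this] at hρle
        exact absurd hyB (not_lt.mpr hρle)
  exact key hz
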